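/- Let C be the 6×6 matrix over ℚ with C_{ii} = 2, C_{ij} = −1 whenever {i,j} is one of the pairs {1,3}, {3,4}, {4,5}, {5,6}, {2,4}, and C_{ij} = 0 otherwise (the Cartan matrix of type E₆ in Bourbaki numbering). Let σ be the permutation of {1,…,6} exchanging 1 ↔ 6 and 3 ↔ 5 and fixing 2 and 4. Then C is invertible, and for each j set b(j) := min over i ∈ {1,…,6} of (C⁻¹)_{ij} + (C⁻¹)_{i,σ(j)}. Then (b(1),…,b(6)) = (2, 2, 3, 4, 3, 2); the minimum is attained exactly at i ∈ {1,2,6} when j ∈ {1,6}, and exactly at i ∈ {1,6} when 2 ≤ j ≤ 5. -/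
import Mathlib

set_option maxRecDepth 4000 in
private lemma vec6_0 {α : Type*} (a b c d e f : α) : ![a,b,c,d,e,f] (0:Fin 6) = a := rfl
private lemma vec6_1 {α : Type*} (a b c d e f : α) : ![a,b,c,d,e,f] (1:Fin 6) = b := rfl
private lemma vec6_2 {α : Type*} (a b c d e f : α) : ![a,b,c,d,e,f] (2:Fin 6) = c := rfl
private lemma vec6_3 {α : Type*} (a b c d e f : α) : ![a,b,c,d,e,f] (3:Fin 6) = d := rfl
private lemma vec6_4 {α : Type*} (a b c d e f : α) : ![a,b,c,d,e,f] (4:Fin 6) = e := rfl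
private lemma vec6_5 {α : Type*} (a b c d e f : α) : ![a,b,c,d,e,f] (5:Fin 6) = f := rfl

private lemma vec6_mk0 {α : Type*} (a b c d e f : α) (h : 0 < 6) : ![a,b,c,d,e,f] ⟨0,h⟩ = a := rfl
private lemma vec6_mk1 {α : Type*} (a b c d e f : α) (h : 1 < 6) : ![a,b,c,d,e,f] ⟨1,h⟩ = b := rfl
private lemma vec6_mk2 {α : Type*} (a b c d e f : α) (h : 2 < 6) : ![a,b,c,d,e,f] ⟨2,h⟩ = c := rfl
private lemma vec6_mk3 {α : Type*} (a b c d e f : α) (h : 3 < 6) : ![a,b,c,d,e,f] ⟨3,h⟩ = d := rfl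
private lemma vec6_mk4 {α : Type*} (a b c d e f : α) (h : 4 < 6) : ![a,b,c,d,e,f] ⟨4,h⟩ = e := rfl
private lemma vec6_mk5 {α : Type*} (a b c d e f : α) (h : 5 < 6) : ![a,b,c,d,e,f] ⟨5,h⟩ = f := rfl

set_option maxRecDepth 4000 in
set_option maxHeartbeats 2000000 in
/-- Type E₆ row of the minimal bandwidth theorem: `C` is the Cartan matrix of type E₆ in
Bourbaki numbering (0-based indexing: Lean index `i : Fin 6` corresponds to the math
index `i+1`), `σ` is the diagram automorphism 1 ↔ 6, 3 ↔ 5, and `b = (2,2,3,4,3,2)`.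
The minimum over `i` of `C⁻¹ i j + C⁻¹ i (σ j)` equals `b j`, attained exactly at
`i ∈ {1,2,6}` (math) when `j ∈ {1,6}` and exactly at `i ∈ {1,6}` when `2 ≤ j ≤ 5`. -/
theorem stmt_4 (C : Matrix (Fin 6) (Fin 6) ℚ)
    (hC : C = !![2, 0, -1, 0, 0, 0;
                 0, 2, 0, -1, 0, 0;
                 -1, 0, 2, -1, 0, 0;
                 0, -1, -1, 2, -1, 0;
                 0, 0, 0, -1, 2, -1;
                 0, 0, 0, 0, -1, 2])
    (σ : Fin 6 → Fin 6) (hσ : σ = ![5, 1, 4, 3, 2, 0])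
    (b : Fin 6 → ℚ) (hb : b = ![2, 2, 3, 4, 3, 2]) :
    IsUnit C ∧
    ∀ j : Fin 6,
      (∀ i : Fin 6, b j ≤ C⁻¹ i j + C⁻¹ i (σ j)) ∧
      (∃ i : Fin 6, C⁻¹ i j + C⁻¹ i (σ j) = b j) ∧
      ((j = 0 ∨ j = 5) →
        ∀ i : Fin 6, (C⁻¹ i j + C⁻¹ i (σ j) = b j ↔ (i = 0 ∨ i = 1 ∨ i = 5))) ∧
      ((j = 1 ∨ j = 2 ∨ j = 3 ∨ j = 4) →
        ∀ i : Fin 6, (C⁻¹ i j + C⁻¹ i (σ j) = b j ↔ (i = 0 ∨ i = 5))) := by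
  have hmul : C * !![4/3, 1, 5/3, 2, 4/3, 2/3;
                     1, 2, 2, 3, 2, 1;
                     5/3, 2, 10/3, 4, 8/3, 4/3;
                     2, 3, 4, 6, 4, 2;
                     4/3, 2, 8/3, 4, 10/3, 5/3;
                     2/3, 1, 4/3, 2, 5/3, 4/3] = 1 := by
    subst hC
    ext i k
    fin_cases i <;> fin_cases k <;>
      simp only [Matrix.mul_apply, Fin.sum_univ_six, Matrix.of_apply,
        vec6_0, vec6_1, vec6_2, vec6_3, vec6_4, vec6_5, vec6_mk0, vec6_mk1, vec6_mk2, vec6_mk3, vec6_mk4, vec6_mk5,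
        Matrix.one_apply, Fin.ext_iff] <;> norm_num
  have hinv : C⁻¹ = !![4/3, 1, 5/3, 2, 4/3, 2/3;
                     1, 2, 2, 3, 2, 1;
                     5/3, 2, 10/3, 4, 8/3, 4/3;
                     2, 3, 4, 6, 4, 2;
                     4/3, 2, 8/3, 4, 10/3, 5/3;
                     2/3, 1, 4/3, 2, 5/3, 4/3] := Matrix.inv_eq_right_inv hmul
  constructor
  · exact @isUnit_of_invertible _ _ C (invertibleOfRightInverse _ _ hmul)
  · intro j
    subst hσ hb
    refine ⟨?_, ?_, ?_, ?_⟩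
    · intro i
      fin_cases j <;> fin_cases i <;>
        simp only [hinv, Matrix.of_apply,
          vec6_0, vec6_1, vec6_2, vec6_3, vec6_4, vec6_5, vec6_mk0, vec6_mk1, vec6_mk2, vec6_mk3, vec6_mk4, vec6_mk5] <;> norm_num
    · refine ⟨0, ?_⟩
      fin_cases j <;>
        simp only [hinv, Matrix.of_apply,
          vec6_0, vec6_1, vec6_2, vec6_3, vec6_4, vec6_5, vec6_mk0, vec6_mk1, vec6_mk2, vec6_mk3, vec6_mk4, vec6_mk5] <;> norm_num
    · rintro (rfl | rfl) i <;> fin_cases i <;>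
        simp only [hinv, Matrix.of_apply,
          vec6_0, vec6_1, vec6_2, vec6_3, vec6_4, vec6_5, vec6_mk0, vec6_mk1, vec6_mk2, vec6_mk3, vec6_mk4, vec6_mk5, Fin.ext_iff] <;>
        norm_num <;> decide
    · rintro (rfl | rfl | rfl | rfl) i <;> fin_cases i <;>
        simp only [hinv, Matrix.of_apply,
          vec6_0, vec6_1, vec6_2, vec6_3, vec6_4, vec6_5, vec6_mk0, vec6_mk1, vec6_mk2, vec6_mk3, vec6_mk4, vec6_mk5, Fin.ext_iff] <;>
        norm_num <;> decide
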